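/- Let D = (d_{ij}) be an m×m real matrix with d_{ii} ≥ 0, d_{ij} ≤ 0 for i ≠ j, ∑_j d_{ij} = 0 for all i, and suppose that for all distinct i, j and all subsets I of {1,...,m} containing j but not i, one has −(∑_{k ∈ I} d_{ik} + ∑_{k ∉ I} d_{jk}) ≥ δ for some δ > 0. Then for any vector u ∈ ℝ^m with u_1 ≥ u_k ≥ u_2 for all k = 3,...,m, one has ∑_{j=1}^m (d_{1j} − d_{2j}) u_j ≥ δ(u_1 − u_2). -/

import Mathlib

/-- Key algebraic inequality: for a monotone matrix with uniformly coupled rows,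
and u with u_a largest and u_b smallest, ∑ⱼ (d_{aj} − d_{bj}) uⱼ ≥ δ (u_a − u_b). -/
theorem stmt_9 (m : ℕ) (D : Matrix (Fin m) (Fin m) ℝ) (δ : ℝ) (hδ : 0 < δ)
    (hdiag : ∀ i, 0 ≤ D i i)
    (hoff : ∀ i j, i ≠ j → D i j ≤ 0)
    (hrow : ∀ i, ∑ j, D i j = 0)
    (hcoupl : ∀ i j, i ≠ j → ∀ I : Finset (Fin m), j ∈ I → i ∉ I →
      δ ≤ -((∑ k ∈ I, D i k) + ∑ k ∈ Iᶜ, D j k))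
    (a b : Fin m) (hab : a ≠ b) (u : Fin m → ℝ)
    (hu : ∀ k, k ≠ a → k ≠ b → u b ≤ u k ∧ u k ≤ u a) (huab : u b ≤ u a) :
    δ * (u a - u b) ≤ ∑ j, (D a j - D b j) * u j := by
  classical
  have hm : 2 ≤ m := by
    have h1 := a.2; have h2 := b.2
    have h3 : (a : ℕ) ≠ (b : ℕ) := fun h => hab (Fin.ext h)
    omega
  set c : Fin m → ℝ := fun j => D a j - D b j with hc
  have hcsum : ∑ j, c j = 0 := by
    simp only [hc, Finset.sum_sub_distrib, hrow, sub_zero]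
  set r : Fin m → ℝ := fun j => if j = a then 2 else if j = b then 0 else 1 with hr
  set w : Fin m → ℝ ×ₗ ℝ := fun j => toLex (u j, r j) with hw
  set σ : Equiv.Perm (Fin m) := Tuple.sort w with hσ
  have hwmono : Monotone (w ∘ σ) := Tuple.monotone_sort w
  have humono : ∀ i j : Fin m, i ≤ j → u (σ i) ≤ u (σ j) := by
    intro i j hij
    have h := hwmono hij
    simp only [Function.comp, hw] at h
    rcases Prod.Lex.le_iff.mp h with h' | h'
    · exact le_of_lt h'
    · exact le_of_eq h'.1
  have hbmin : ∀ j, j ≠ b → w b < w j := by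
    intro j hj
    have hub : u b ≤ u j := by
      by_cases hja : j = a
      · subst hja; exact huab
      · exact (hu j hja hj).1
    rcases lt_or_eq_of_le hub with h | h
    · exact Prod.Lex.lt_iff.mpr (Or.inl h)
    · refine Prod.Lex.lt_iff.mpr (Or.inr ⟨h, ?_⟩)
      have hba : b ≠ a := Ne.symm hab
      show r b < r j
      simp only [hr]
      rw [if_neg hba]
      simp only [if_true]
      split_ifs <;> first | norm_num | exact absurd ‹j = b› hj
  have hamax : ∀ j, j ≠ a → w j < w a := by
    intro j hj
    have hua : u j ≤ u a := by
      by_cases hjb : j = b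
      · subst hjb; exact huab
      · exact (hu j hj hjb).2
    rcases lt_or_eq_of_le hua with h | h
    · exact Prod.Lex.lt_iff.mpr (Or.inl h)
    · refine Prod.Lex.lt_iff.mpr (Or.inr ⟨h, ?_⟩)
      show r j < r a
      simp only [hr]
      simp only [if_true]
      rw [if_neg hj]
      split_ifs <;> norm_num
  have hm0 : 0 < m := by omega
  have hm1 : m - 1 < m := by omega
  have hσ0 : σ ⟨0, hm0⟩ = b := by
    by_contra h
    have h1 : w b < w (σ ⟨0, hm0⟩) := hbmin _ h
    have h2 : (w ∘ σ) ⟨0, hm0⟩ ≤ (w ∘ σ) (σ.symm b) := hwmono (by simp [Fin.le_def])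
    simp only [Function.comp, Equiv.apply_symm_apply] at h2
    exact absurd h2 (not_le.mpr h1)
  have hσlast : σ ⟨m - 1, hm1⟩ = a := by
    by_contra h
    have h1 : w (σ ⟨m - 1, hm1⟩) < w a := hamax _ h
    have h2 : (w ∘ σ) (σ.symm a) ≤ (w ∘ σ) ⟨m - 1, hm1⟩ := by
      apply hwmono
      simp only [Fin.le_def]
      have := (σ.symm a).2
      omega
    simp only [Function.comp, Equiv.apply_symm_apply] at h2
    exact absurd h2 (not_le.mpr h1)
  -- extend to ℕ
  set f : ℕ → ℝ := fun i => if h : i < m then u (σ ⟨i, h⟩) else 0 with hf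
  set g : ℕ → ℝ := fun i => if h : i < m then c (σ ⟨i, h⟩) else 0 with hg
  -- total sum of g over range m is 0
  have hGtot : ∑ i ∈ Finset.range m, g i = 0 := by
    rw [← Fin.sum_univ_eq_sum_range]
    have : ∀ t : Fin m, g t.val = c (σ t) := by
      intro t
      simp only [hg, t.2, dif_pos, Fin.eta]
    rw [Finset.sum_congr rfl (fun t _ => this t), Equiv.sum_comp σ c, hcsum]
  -- the key sum identity
  have hsum : ∑ j, c j * u j = ∑ i ∈ Finset.range m, f i • g i := by
    rw [← Equiv.sum_comp σ (fun j => c j * u j), ← Fin.sum_univ_eq_sum_range]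
    apply Finset.sum_congr rfl
    intro t _
    simp only [hf, hg, t.2, dif_pos, Fin.eta, smul_eq_mul]
    ring
  rw [show (∑ j, (D a j - D b j) * u j) = ∑ j, c j * u j from rfl, hsum,
    Finset.sum_range_by_parts f g m, hGtot, smul_zero, zero_sub]
  -- partial sums: for i < m - 1, δ ≤ -(∑ j ∈ range (i+1), g j)
  have hkey : ∀ i ∈ Finset.range (m - 1), δ ≤ -(∑ j ∈ Finset.range (i + 1), g j) := by
    intro i hi
    rw [Finset.mem_range] at hi
    set K : Finset (Fin m) := Finset.univ.filter (fun t => (t : ℕ) ≤ i) with hK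
    set I : Finset (Fin m) := (K.image σ)ᶜ with hI
    have hGK : ∑ j ∈ Finset.range (i + 1), g j = ∑ t ∈ K, c (σ t) := by
      apply Finset.sum_nbij' (i := fun j : ℕ => (⟨min j (m - 1), by omega⟩ : Fin m))
        (j := fun t : Fin m => (t : ℕ))
      · intro j hj
        rw [Finset.mem_range] at hj
        simp only [hK, Finset.mem_filter, Finset.mem_univ, true_and]
        omega
      · intro t ht
        simp only [hK, Finset.mem_filter] at ht
        rw [Finset.mem_range]; omega
      · intro j hj
        rw [Finset.mem_range] at hj
        simp only []; omega
      · intro t ht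
        simp only [hK, Finset.mem_filter] at ht
        apply Fin.ext
        simp only []; omega
      · intro j hj
        rw [Finset.mem_range] at hj
        have hjm : j < m := by omega
        simp only [hg, dif_pos hjm]
        congr 2
        apply Fin.ext
        simp only []; omega
    have haI : a ∈ I := by
      simp only [hI, Finset.mem_compl, Finset.mem_image]
      rintro ⟨t, ht, hta⟩
      simp only [hK, Finset.mem_filter] at ht
      have : t = ⟨m - 1, hm1⟩ := σ.injective (by rw [hta, hσlast])
      subst this
      simp at ht
      omega
    have hbI : b ∉ I := by
      simp only [hI, Finset.mem_compl, not_not, Finset.mem_image]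
      exact ⟨⟨0, hm0⟩, by simp [hK], hσ0⟩
    have hcp := hcoupl b a (Ne.symm hab) I haI hbI
    have hsplitI : ∀ z : Fin m, ∑ k ∈ Iᶜ, D z k = -(∑ k ∈ I, D z k) := by
      intro z
      have := hrow z
      rw [← Finset.sum_add_sum_compl I (fun k => D z k)] at this
      linarith
    rw [hsplitI a] at hcp
    have hδI : δ ≤ ∑ k ∈ I, c k := by
      simp only [hc, Finset.sum_sub_distrib]
      linarith
    have hIc : ∑ k ∈ I, c k = -(∑ t ∈ K, c (σ t)) := by
      have h1 : ∑ k ∈ Iᶜ, c k = ∑ t ∈ K, c (σ t) := by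
        rw [hI, compl_compl]
        rw [Finset.sum_image (fun x _ y _ h => σ.injective h)]
      have h2 := Finset.sum_add_sum_compl I c
      rw [hcsum] at h2
      linarith
    rw [hGK]
    linarith [hIc ▸ hδI]
  calc δ * (u a - u b)
      = ∑ i ∈ Finset.range (m - 1), (f (i + 1) - f i) * δ := by
        rw [← Finset.sum_mul, Finset.sum_range_sub f (m - 1)]
        have hf0 : f 0 = u b := by simp only [hf, dif_pos hm0, hσ0]
        have hfl : f (m - 1) = u a := by simp only [hf, dif_pos hm1, hσlast]
        rw [hf0, hfl]; ring
    _ ≤ ∑ i ∈ Finset.range (m - 1), (f (i + 1) - f i) • (-(∑ j ∈ Finset.range (i + 1), g j)) := by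
        apply Finset.sum_le_sum
        intro i hi
        rw [Finset.mem_range] at hi
        have hstep : f i ≤ f (i + 1) := by
          simp only [hf, dif_pos (show i < m by omega), dif_pos (show i + 1 < m by omega)]
          exact humono _ _ (by simp [Fin.le_def])
        rw [smul_eq_mul]
        exact mul_le_mul_of_nonneg_left (hkey i (by rwa [Finset.mem_range])) (by linarith)
    _ = -∑ i ∈ Finset.range (m - 1), (f (i + 1) - f i) • ∑ j ∈ Finset.range (i + 1), g j := by
        rw [← Finset.sum_neg_distrib]
        apply Finset.sum_congr rfl
        intro i _
        simp only [smul_eq_mul]; ring
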